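/- Kurepa's tree Λ cannot be written as a countable union Λ = ⋃_{n=1}^∞ E_n, where each set E_n ⊆ Λ has the property that ℓ(t,u) is an even number whenever t, u ∈ E_n and t ≺ u. -/

import Mathlib

/-- An element of Kurepa's tree `Λ`: an injective function `t : α → ω` with countable
ordinal domain `α` and coinfinite range.  The function is represented as a total function
on ordinals which takes the junk value `0` outside of the domain. -/
structure Lambda : Type 1 where
  toFun : Ordinal.{0} → ℕ
  dom : Ordinal.{0}
  countable : dom.card ≤ Cardinal.aleph0
  inj : ∀ β γ, β < dom → γ < dom → toFun β = toFun γ → β = γ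
  coinfinite : {n : ℕ | ∀ β, β < dom → toFun β ≠ n}.Infinite
  junk : ∀ β, ¬ β < dom → toFun β = 0

/-- The tree order on `Λ`: `s ≼ t` iff `t` extends `s`. -/
def Lambda.le (s t : Lambda) : Prop :=
  s.dom ≤ t.dom ∧ ∀ β, β < s.dom → s.toFun β = t.toFun β

/-- The strict tree order on `Λ`. -/
def Lambda.lt (s t : Lambda) : Prop := Lambda.le s t ∧ s ≠ t

/-- `r ≺ s` for `r ∈ Λ ∪ {0}` (`none` plays the role of the extra least element `0`). -/
def precLt : Option Lambda → Lambda → Prop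
  | none, _ => True
  | some r, s => Lambda.lt r s

/-- The interval `(r, t] = {s ∈ Λ : r ≺ s ≼ t}`, with `r ∈ Λ ∪ {0}`. -/
def lamIoc (r : Option Lambda) (t : Lambda) : Set Lambda :=
  {s | precLt r s ∧ Lambda.le s t}

/-- The position of the minimum of `t` on the ordinal interval `[δ, β)`. -/
noncomputable def minPos (t : Ordinal.{0} → ℕ) (δ β : Ordinal.{0}) : Ordinal.{0} :=
  sInf {ξ | δ ≤ ξ ∧ ξ < β ∧ ∀ η, δ ≤ η → η < β → t ξ ≤ t η}

lemma minPos_lt (t : Ordinal.{0} → ℕ) {δ β : Ordinal.{0}} (h : δ < β) : minPos t δ β < β := by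
  have hne : {ξ : Ordinal.{0} | δ ≤ ξ ∧ ξ < β ∧ ∀ η, δ ≤ η → η < β → t ξ ≤ t η}.Nonempty := by
    have h1 : {n : ℕ | ∃ ξ : Ordinal.{0}, δ ≤ ξ ∧ ξ < β ∧ t ξ = n}.Nonempty :=
      ⟨t δ, δ, le_refl _, h, rfl⟩
    obtain ⟨ξ, hξ1, hξ2, hξ3⟩ := Nat.sInf_mem h1
    refine ⟨ξ, hξ1, hξ2, fun η h1' h2' => ?_⟩
    rw [hξ3]
    exact Nat.sInf_le ⟨η, h1', h2', rfl⟩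
  obtain ⟨ξ, hξ⟩ := hne
  calc minPos t δ β ≤ ξ := csInf_le (OrderBot.bddBelow _) hξ
    _ < β := hξ.2.1

/-- The sequence `τ` computed from the starting ordinal `β₀` downwards: `τ` is obtained by
repeatedly passing from `β` to the position of the minimum of `t` on `[δ, β)`, stopping upon
reaching `δ`.  The resulting finite sequence `(β_k, …, β_1)` is recorded as a list in the
order `[β_k, …, β_1]` (so concatenation of the lists corresponds to `⌢`). -/
noncomputable def tauFrom (δ : Ordinal.{0}) (t : Ordinal.{0} → ℕ) : Ordinal.{0} → List Ordinal.{0} :=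
  WellFounded.fix wellFounded_lt
    (fun β IH => if h : δ < β then IH (minPos t δ β) (minPos_lt t h) ++ [minPos t δ β] else [])

/-- The finite sequence `τ(s,t)` of ordinals, for `s ≼ t` in `Λ`. -/
noncomputable def tau (s t : Lambda) : List Ordinal.{0} :=
  tauFrom s.dom t.toFun t.dom

/-- `ℓ(s,t)`, the length of `τ(s,t)`. -/
noncomputable def ell (s t : Lambda) : ℕ := (tau s t).length

/-- The underlying set of the `Λ`-duplicate: `D = Λ × {1, -1}`. -/
abbrev Dup : Type 1 := Lambda × ℤˣ

/-- The basic open sets `W(r,t,i)` of the `Λ`-duplicate. -/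
noncomputable def Wset (r : Option Lambda) (t : Lambda) (i : ℤˣ) : Set Dup :=
  {q | q.1 ∈ lamIoc r t ∧ q.2 = (-1) ^ ell q.1 t * i}

/-- The collection of all basic open sets `W(r,t,i)` with `r ≺ t`. -/
noncomputable def WBasis : Set (Set Dup) :=
  {S | ∃ (r : Option Lambda) (t : Lambda) (i : ℤˣ), precLt r t ∧ S = Wset r t i}

/-- The topology of the `Λ`-duplicate, generated by the basic sets `W(r,t,i)`. -/
noncomputable instance : TopologicalSpace Dup := TopologicalSpace.generateFrom WBasis


namespace KurepaAux

open Classical Ordinal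

lemma infinite_nat_exists_gt {s : Set ℕ} (hs : s.Infinite) (a : ℕ) : ∃ b ∈ s, a < b := by
  by_contra h
  push_neg at h
  exact hs (Set.Finite.subset (Set.finite_Iic a) fun x hx => h x hx)

lemma Lambda.le_refl (t : Lambda) : Lambda.le t t := ⟨le_rfl, fun _ _ => rfl⟩

lemma Lambda.le_trans {a b c : Lambda} (h1 : Lambda.le a b) (h2 : Lambda.le b c) :
    Lambda.le a c :=
  ⟨h1.1.trans h2.1, fun β hβ => (h1.2 β hβ).trans (h2.2 β (hβ.trans_le h1.1))⟩

lemma exists_fresh (t : Lambda) (a : ℕ) :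
    ∃ v, a < v ∧ ∀ β, β < t.dom → t.toFun β ≠ v := by
  obtain ⟨v, hv, hva⟩ := infinite_nat_exists_gt t.coinfinite a
  exact ⟨v, hva, hv⟩

/-- Extension of `t` by one extra value `v` at position `t.dom`. -/
noncomputable def Lambda.snoc (t : Lambda) (v : ℕ) (hv : ∀ β, β < t.dom → t.toFun β ≠ v) :
    Lambda where
  toFun := fun β => if β < t.dom then t.toFun β else if β = t.dom then v else 0
  dom := t.dom + 1
  countable := by
    rw [Ordinal.card_add, Ordinal.card_one]
    calc t.dom.card + 1 ≤ Cardinal.aleph0 + Cardinal.aleph0 :=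
          add_le_add t.countable Cardinal.one_le_aleph0
      _ = Cardinal.aleph0 := Cardinal.aleph0_add_aleph0
  inj := by
    intro β γ hβ hγ h
    try dsimp only at h
    rw [Ordinal.add_one_eq_succ, Order.lt_succ_iff] at hβ hγ
    rcases eq_or_lt_of_le hβ with hβ' | hβ' <;> rcases eq_or_lt_of_le hγ with hγ' | hγ'
    · rw [hβ', hγ']
    · rw [hβ', if_neg (lt_irrefl _), if_pos rfl, if_pos hγ'] at h
      exact absurd h.symm (hv γ hγ')
    · rw [hγ', if_neg (lt_irrefl _), if_pos rfl, if_pos hβ'] at h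
      exact absurd h (hv β hβ')
    · rw [if_pos hβ', if_pos hγ'] at h
      exact t.inj β γ hβ' hγ' h
  coinfinite := by
    refine (t.coinfinite.diff (Set.finite_singleton v)).mono ?_
    rintro n ⟨hn, hnv⟩ β hβ
    try dsimp only
    rw [Ordinal.add_one_eq_succ, Order.lt_succ_iff] at hβ
    rcases eq_or_lt_of_le hβ with hβ' | hβ'
    · rw [hβ', if_neg (lt_irrefl _), if_pos rfl]
      exact fun h => hnv (Set.mem_singleton_iff.mpr h.symm)
    · rw [if_pos hβ']
      exact hn β hβ'
  junk := by
    intro β hβ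
    try dsimp only
    rw [Ordinal.add_one_eq_succ, Order.lt_succ_iff] at hβ
    rw [if_neg (fun h => hβ (le_of_lt h)), if_neg (fun h => hβ (le_of_eq h))]

lemma snoc_dom (t : Lambda) (v : ℕ) (hv : ∀ β, β < t.dom → t.toFun β ≠ v) :
    (Lambda.snoc t v hv).dom = t.dom + 1 := rfl

lemma dom_lt_snoc (t : Lambda) (v : ℕ) (hv : ∀ β, β < t.dom → t.toFun β ≠ v) :
    t.dom < (Lambda.snoc t v hv).dom := by
  rw [snoc_dom, Ordinal.add_one_eq_succ]
  exact Order.lt_succ _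

lemma snoc_le (t : Lambda) (v : ℕ) (hv : ∀ β, β < t.dom → t.toFun β ≠ v) :
    Lambda.le t (Lambda.snoc t v hv) :=
  ⟨le_of_lt (dom_lt_snoc t v hv), fun β hβ => (if_pos hβ).symm⟩

lemma snoc_toFun_dom (t : Lambda) (v : ℕ) (hv : ∀ β, β < t.dom → t.toFun β ≠ v) :
    (Lambda.snoc t v hv).toFun t.dom = v := by
  show (if t.dom < t.dom then _ else if t.dom = t.dom then v else 0) = v
  rw [if_neg (lt_irrefl _), if_pos rfl]

/-- The shape condition on extensions used in the fusion argument: all new values are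
bigger than `B`, and the first new value is smaller than all the other new values. -/
def Phi (t : Lambda) (B : ℕ) (u : Lambda) : Prop :=
  Lambda.le t u ∧ ∀ ξ, t.dom ≤ ξ → ξ < u.dom →
    B < u.toFun ξ ∧ (t.dom < ξ → u.toFun t.dom < u.toFun ξ)

/-- One step of the construction. -/
def StepRel (E : Set Lambda) (t : Lambda) (B : ℕ) (t' : Lambda) (B' : ℕ) : Prop :=
  Phi t B t' ∧ t.dom < t'.dom ∧ B < B' ∧ t'.toFun t.dom < B' ∧
  (∀ β, β < t'.dom → t'.toFun β ≠ B') ∧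
  ((∃ u ∈ E, Phi t B u ∧ t.dom < u.dom) → t' ∈ E)

lemma step_exists (E : Set Lambda) (t : Lambda) (B : ℕ) :
    ∃ p : Lambda × ℕ, StepRel E t B p.1 p.2 := by
  by_cases h : ∃ u ∈ E, Phi t B u ∧ t.dom < u.dom
  · obtain ⟨u, huE, huP, hud⟩ := h
    obtain ⟨B', hB1, hB2⟩ := exists_fresh u (max B (u.toFun t.dom))
    exact ⟨(u, B'), huP, hud, lt_of_le_of_lt (le_max_left _ _) hB1,
      lt_of_le_of_lt (le_max_right _ _) hB1, hB2, fun _ => huE⟩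
  · obtain ⟨v, hv1, hv2⟩ := exists_fresh t B
    obtain ⟨B', hB1, hB2⟩ := exists_fresh (Lambda.snoc t v hv2) (max B v)
    have htop : (Lambda.snoc t v hv2).toFun t.dom = v := snoc_toFun_dom t v hv2
    refine ⟨(Lambda.snoc t v hv2, B'), ⟨snoc_le t v hv2, ?_⟩, dom_lt_snoc t v hv2,
      lt_of_le_of_lt (le_max_left _ _) hB1, ?_, hB2, fun hc => absurd hc h⟩
    · intro ξ h1 h2
      have hξ : ξ = t.dom := by
        rw [snoc_dom, Ordinal.add_one_eq_succ, Order.lt_succ_iff] at h2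
        exact le_antisymm h2 h1
      rw [hξ, htop]
      exact ⟨hv1, fun hcon => absurd hcon (lt_irrefl _)⟩
    · rw [htop]
      exact lt_of_le_of_lt (le_max_right _ _) hB1

/-- The empty element of `Λ`. -/
noncomputable def lambdaEmpty : Lambda where
  toFun := fun _ => 0
  dom := 0
  countable := by simp
  inj := fun β _ hβ _ _ => absurd hβ (not_lt_zero : ¬ β < 0)
  coinfinite := by
    have h : {n : ℕ | ∀ β, β < (0 : Ordinal.{0}) → (fun _ => 0) β ≠ n} = Set.univ :=
      Set.eq_univ_of_forall (fun n β hβ => absurd hβ (not_lt_zero : ¬ β < 0))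
    rw [h]
    exact Set.infinite_univ
  junk := fun _ _ => rfl

/-- The fusion sequence, together with its bounds. -/
noncomputable def chain (E : ℕ → Set Lambda) : ℕ → Lambda × ℕ :=
  fun n => Nat.rec (motive := fun _ => Lambda × ℕ) (lambdaEmpty, 0)
    (fun n p => Classical.choose (step_exists (E n) p.1 p.2)) n

noncomputable def KT (E : ℕ → Set Lambda) (n : ℕ) : Lambda := (chain E n).1

noncomputable def KB (E : ℕ → Set Lambda) (n : ℕ) : ℕ := (chain E n).2

lemma chain_spec (E : ℕ → Set Lambda) (n : ℕ) :
    StepRel (E n) (KT E n) (KB E n) (KT E (n+1)) (KB E (n+1)) :=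
  Classical.choose_spec (step_exists (E n) (KT E n) (KB E n))

lemma KT_dom_lt (E : ℕ → Set Lambda) (n : ℕ) : (KT E n).dom < (KT E (n+1)).dom :=
  (chain_spec E n).2.1

lemma KT_le_mono (E : ℕ → Set Lambda) {m n : ℕ} (h : m ≤ n) :
    Lambda.le (KT E m) (KT E n) := by
  induction h with
  | refl => exact Lambda.le_refl _
  | step _ ih => exact Lambda.le_trans ih (chain_spec E _).1.1

lemma KB_mono (E : ℕ → Set Lambda) {m n : ℕ} (h : m ≤ n) : KB E m ≤ KB E n := by
  induction h with
  | refl => exact le_rfl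
  | step _ ih => exact ih.trans (le_of_lt (chain_spec E _).2.2.1)

end KurepaAux
namespace KurepaAux

open Classical Ordinal

noncomputable def omegaDom (E : ℕ → Set Lambda) : Ordinal.{0} := ⨆ n, (KT E n).dom

noncomputable def omegaFun (E : ℕ → Set Lambda) : Ordinal.{0} → ℕ := fun β =>
  if h : ∃ n, β < (KT E n).dom then (KT E h.choose).toFun β else 0

lemma lt_omegaDom_iff (E : ℕ → Set Lambda) {β : Ordinal.{0}} :
    β < omegaDom E ↔ ∃ n, β < (KT E n).dom :=
  Ordinal.lt_iSup_iff

lemma dom_le_omegaDom (E : ℕ → Set Lambda) (n : ℕ) : (KT E n).dom ≤ omegaDom E :=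
  le_ciSup (Ordinal.bddAbove_range _) n

lemma dom_lt_omegaDom (E : ℕ → Set Lambda) (n : ℕ) : (KT E n).dom < omegaDom E :=
  lt_of_lt_of_le (KT_dom_lt E n) (dom_le_omegaDom E (n+1))

lemma omegaFun_eq (E : ℕ → Set Lambda) {n : ℕ} {β : Ordinal.{0}}
    (hβ : β < (KT E n).dom) : omegaFun E β = (KT E n).toFun β := by
  have h : ∃ m, β < (KT E m).dom := ⟨n, hβ⟩
  rw [omegaFun, dif_pos h]
  rcases le_total h.choose n with hc | hc
  · exact (KT_le_mono E hc).2 β h.choose_spec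
  · exact ((KT_le_mono E hc).2 β hβ).symm

/-- All values of the limit at positions in `[dom (KT n), dom (KT m))` exceed `KB n`. -/
lemma val_gt_KB (E : ℕ → Set Lambda) :
    ∀ m n ξ, (KT E n).dom ≤ ξ → ξ < (KT E m).dom → KB E n < omegaFun E ξ := by
  intro m
  induction m with
  | zero => exact fun n ξ _ h2 => absurd h2 (not_lt_zero : ¬ ξ < 0)
  | succ m ih =>
    intro n ξ h1 h2
    by_cases hc : ξ < (KT E m).dom
    · exact ih n ξ h1 hc
    · push_neg at hc
      have hnm : n ≤ m := by
        by_contra hn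
        push_neg at hn
        exact absurd h2 (not_lt.mpr ((KT_le_mono E hn).1.trans h1))
      rw [omegaFun_eq E h2]
      exact lt_of_le_of_lt (KB_mono E hnm) (((chain_spec E m).1.2 ξ hc h2).1)

/-- The value of the limit at position `dom (KT n)` is smaller than all later values. -/
lemma first_val_min (E : ℕ → Set Lambda) :
    ∀ m n ξ, (KT E n).dom < ξ → ξ < (KT E m).dom →
      omegaFun E ((KT E n).dom) < omegaFun E ξ := by
  intro m
  induction m with
  | zero => exact fun n ξ _ h2 => absurd h2 (not_lt_zero : ¬ ξ < 0)
  | succ m ih =>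
    intro n ξ h1 h2
    by_cases hc : ξ < (KT E m).dom
    · exact ih n ξ h1 hc
    · push_neg at hc
      have hg : omegaFun E ((KT E n).dom) = (KT E (n+1)).toFun ((KT E n).dom) :=
        omegaFun_eq E (KT_dom_lt E n)
      have hnm : n ≤ m := by
        by_contra hn
        push_neg at hn
        exact absurd h2 (not_lt.mpr ((KT_le_mono E hn).1.trans h1.le))
      rw [omegaFun_eq E h2, hg]
      rcases lt_or_eq_of_le hnm with hlt | heq
      · calc (KT E (n+1)).toFun (KT E n).dom
            < KB E (n+1) := (chain_spec E n).2.2.2.1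
          _ ≤ KB E m := KB_mono E (Nat.succ_le_of_lt hlt)
          _ < (KT E (m+1)).toFun ξ := ((chain_spec E m).1.2 ξ hc h2).1
      · subst heq
        exact ((chain_spec E n).1.2 ξ hc h2).2 h1

/-- The limit of the fusion sequence. -/
noncomputable def tOmega (E : ℕ → Set Lambda) : Lambda where
  toFun := omegaFun E
  dom := omegaDom E
  countable := by
    have h : omegaDom E < (Cardinal.aleph 1).ord := by
      apply Cardinal.iSup_lt_ord_of_isRegular Cardinal.isRegular_aleph_one
      · rw [Cardinal.mk_nat]
        exact Cardinal.aleph0_lt_aleph_one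
      · intro i
        rw [Cardinal.lt_ord]
        exact lt_of_le_of_lt (KT E i).countable Cardinal.aleph0_lt_aleph_one
    rw [Cardinal.lt_ord, ← Cardinal.succ_aleph0, Order.lt_succ_iff] at h
    exact h
  inj := by
    intro β γ hβ hγ h
    obtain ⟨a, ha⟩ := (lt_omegaDom_iff E).mp hβ
    obtain ⟨b, hb⟩ := (lt_omegaDom_iff E).mp hγ
    have hβ' : β < (KT E (max a b)).dom :=
      lt_of_lt_of_le ha ((KT_le_mono E (le_max_left a b)).1)
    have hγ' : γ < (KT E (max a b)).dom :=
      lt_of_lt_of_le hb ((KT_le_mono E (le_max_right a b)).1)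
    rw [omegaFun_eq E hβ', omegaFun_eq E hγ'] at h
    exact (KT E (max a b)).inj β γ hβ' hγ' h
  coinfinite := by
    apply Set.infinite_of_injective_forall_mem (f := fun n : ℕ => KB E (n+1))
    · intro a b hab
      exact (strictMono_nat_of_lt_succ (fun n => (chain_spec E (n+1)).2.2.1)).injective hab
    · intro n β hβ
      obtain ⟨m, hm⟩ := (lt_omegaDom_iff E).mp hβ
      by_cases hc : β < (KT E (n+1)).dom
      · rw [omegaFun_eq E hc]
        exact (chain_spec E n).2.2.2.2.1 β hc
      · push_neg at hc
        exact ne_of_gt (val_gt_KB E m (n+1) β hc hm)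
  junk := fun β hβ =>
    dif_neg (fun h => hβ ((lt_omegaDom_iff E).mpr h))

lemma le_omega (E : ℕ → Set Lambda) (n : ℕ) : Lambda.le (KT E n) (tOmega E) :=
  ⟨dom_le_omegaDom E n, fun β hβ => (omegaFun_eq E hβ).symm⟩

lemma phi_omega (E : ℕ → Set Lambda) (n : ℕ) : Phi (KT E n) (KB E n) (tOmega E) := by
  refine ⟨le_omega E n, fun ξ h1 h2 => ?_⟩
  obtain ⟨m, hm⟩ := (lt_omegaDom_iff E).mp h2
  exact ⟨val_gt_KB E m n ξ h1 hm, fun h => first_val_min E m n ξ h hm⟩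

lemma minPos_omega (E : ℕ → Set Lambda) (n : ℕ) :
    minPos (omegaFun E) (KT E n).dom (omegaDom E) = (KT E n).dom := by
  have hmem : (KT E n).dom ∈ {ξ : Ordinal.{0} | (KT E n).dom ≤ ξ ∧ ξ < omegaDom E ∧
      ∀ η, (KT E n).dom ≤ η → η < omegaDom E → omegaFun E ξ ≤ omegaFun E η} := by
    refine ⟨le_rfl, dom_lt_omegaDom E n, fun η h1 h2 => ?_⟩
    rcases eq_or_lt_of_le h1 with h | h
    · rw [h]
    · obtain ⟨m, hm⟩ := (lt_omegaDom_iff E).mp h2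
      exact (first_val_min E m n η h hm).le
  exact le_antisymm (csInf_le (OrderBot.bddBelow _) hmem)
    (le_csInf ⟨_, hmem⟩ fun ξ hξ => hξ.1)

lemma tauFrom_unfold (δ : Ordinal.{0}) (t : Ordinal.{0} → ℕ) (β : Ordinal.{0}) :
    tauFrom δ t β =
      if h : δ < β then tauFrom δ t (minPos t δ β) ++ [minPos t δ β] else [] := by
  unfold tauFrom
  rw [WellFounded.fix_eq]

lemma ell_omega (E : ℕ → Set Lambda) (n : ℕ) : ell (KT E n) (tOmega E) = 1 := by
  have h1 : (KT E n).dom < omegaDom E := dom_lt_omegaDom E n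
  have e1 : tau (KT E n) (tOmega E) = tauFrom (KT E n).dom (omegaFun E) (omegaDom E) := rfl
  rw [ell, e1, tauFrom_unfold, dif_pos h1, minPos_omega, tauFrom_unfold,
    dif_neg (lt_irrefl _)]
  rfl

end KurepaAux
/-- Kurepa's tree `Λ` is not a countable union of sets `E n` such that `ℓ(t,u)` is even
whenever `t, u ∈ E n` and `t ≺ u`. -/
theorem no_countable_even_decomposition :
    ¬ ∃ E : ℕ → Set Lambda,
        (∀ t : Lambda, ∃ n, t ∈ E n) ∧
        (∀ n, ∀ t ∈ E n, ∀ u ∈ E n, Lambda.lt t u → Even (ell t u)) := by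
  rintro ⟨E, hcov, heven⟩
  obtain ⟨N, hN⟩ := hcov (KurepaAux.tOmega E)
  have hstep := KurepaAux.chain_spec E N
  have hmem : KurepaAux.KT E (N+1) ∈ E N :=
    hstep.2.2.2.2.2 ⟨KurepaAux.tOmega E, hN, KurepaAux.phi_omega E N,
      KurepaAux.dom_lt_omegaDom E N⟩
  have hne : KurepaAux.KT E (N+1) ≠ KurepaAux.tOmega E := by
    intro h
    have hd : (KurepaAux.KT E (N+1)).dom < (KurepaAux.tOmega E).dom :=
      KurepaAux.dom_lt_omegaDom E (N+1)
    rw [h] at hd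
    exact lt_irrefl _ hd
  have heq := heven N _ hmem _ hN ⟨KurepaAux.le_omega E (N+1), hne⟩
  rw [KurepaAux.ell_omega E (N+1), Nat.even_iff] at heq
  omega
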